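/- Let T be a string, let B be a cover of T, and let p be the smallest period of B. Partition the set of starting positions of occurrences of B in T into maximal arithmetic progressions with common difference p, and let Δ' ≥ 1 be such that every such maximal progression has at least Δ' terms. If the prefix B' of T of length |B| + (Δ'−1)·p has period p, then B' is also a cover of T. -/
import Mathlib


section Defs

variable {α : Type*}

/-- `C` occurs in `T` at starting position `i`. -/
def OccursAt (C T : List α) (i : ℕ) : Prop :=
  i + C.length ≤ T.length ∧ (T.drop i).take C.length = C

/-- `C` is a cover of `T`: `C` occurs in `T` and every position of `T`
lies within an occurrence of `C`. -/
def IsCover (C T : List α) : Prop :=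
  (∃ i, OccursAt C T i) ∧
    ∀ q, q < T.length → ∃ i, OccursAt C T i ∧ i ≤ q ∧ q < i + C.length

/-- A border of `T` is both a prefix and a suffix of `T`. -/
def IsBorder (B T : List α) : Prop := B <+: T ∧ B <:+ T

/-- `p` is a period of `U`: `U[i] = U[i+p]` for all `0 ≤ i < |U| - p`. -/
def IsPeriod (p : ℕ) (U : List α) : Prop :=
  0 < p ∧ ∀ i, i + p < U.length → U[i]? = U[i + p]?

/-- `U` is aperiodic: its smallest period `p` satisfies `2p > |U|`
(equivalently, every period `p` of `U` satisfies `2p > |U|`). -/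
def StrAperiodic (U : List α) : Prop := ∀ p, IsPeriod p U → U.length < 2 * p

/-- A nonempty string `X` is primitive if `X = Y^t` implies `t = 1`. -/
def StrPrimitive (X : List α) : Prop :=
  X ≠ [] ∧ ∀ (Y : List α) (t : ℕ), X = (List.replicate t Y).flatten → t = 1

/-- A string is superprimitive if it has no proper cover. -/
def Superprimitive (T : List α) : Prop :=
  ¬ ∃ C : List α, IsCover C T ∧ C.length < T.length

/-- The length of the shortest cover of `T`. -/
noncomputable def covLen (T : List α) : ℕ :=
  sInf {c | ∃ C : List α, C.length = c ∧ IsCover C T}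

/-- `{a, a+p, ..., a+(t-1)p}` is a maximal arithmetic progression with
difference `p` inside the set `S`. -/
def MaxProg (S : Set ℕ) (p a t : ℕ) : Prop :=
  0 < t ∧ (∀ r, r < t → a + r * p ∈ S) ∧ (∀ b, b + p = a → b ∉ S) ∧ a + t * p ∉ S

end Defs

/-- Let `B` be a cover of `T` and `p` the smallest period of `B`. If every
maximal arithmetic progression (with difference `p`) of starting positions of
occurrences of `B` in `T` has at least `Δ' ≥ 1` terms, and the prefix `B'` of
`T` of length `|B| + (Δ'-1)p` has period `p`, then `B'` is a cover of `T`. -/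
theorem stmt1 {α : Type*} (T B : List α) (p Δ' : ℕ)
    (hcov : IsCover B T)
    (hper : IsPeriod p B) (hmin : ∀ q, IsPeriod q B → p ≤ q)
    (hΔ : 1 ≤ Δ')
    (hprog : ∀ a t, MaxProg {s | OccursAt B T s} p a t → Δ' ≤ t)
    (hlen : B.length + (Δ' - 1) * p ≤ T.length)
    (hper' : IsPeriod p (T.take (B.length + (Δ' - 1) * p))) :
    IsCover (T.take (B.length + (Δ' - 1) * p)) T := by
  classical
  set L := B.length + (Δ' - 1) * p with hLdef
  rcases eq_or_ne T [] with rfl | hT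
  · exact ⟨⟨0, by simp [OccursAt]⟩, fun q hq => by simp at hq⟩
  have hTpos : 0 < T.length := List.length_pos_iff.2 hT
  have hp : 0 < p := hper.1
  -- B is nonempty
  obtain ⟨i0, hi0, hle0, hlt0⟩ := hcov.2 0 hTpos
  have hBpos : 0 < B.length := by omega
  have hpB : p ≤ B.length := hmin B.length ⟨hBpos, fun i h => absurd h (by omega)⟩
  -- B occurs at 0
  have hB0 : OccursAt B T 0 := by
    have : i0 = 0 := Nat.le_zero.mp hle0
    subst this; exact hi0
  -- elementwise: B vs T
  have hocc_elem : ∀ a, OccursAt B T a → ∀ k, k < B.length → T[a + k]? = B[k]? := by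
    intro a ha k hk
    have h2 := ha.2
    have : ((T.drop a).take B.length)[k]? = B[k]? := by rw [h2]
    rw [List.getElem?_take] at this
    simp only [hk, if_pos] at this
    rw [List.getElem?_drop] at this
    exact this
  have hBpre : ∀ k, k < B.length → T[k]? = B[k]? := by
    intro k hk
    have := hocc_elem 0 hB0 k hk
    simpa using this
  -- length of the prefix
  have hlenB' : (T.take L).length = L := by
    rw [List.length_take]; omega
  -- periodicity of T within the prefix
  have hperT : ∀ i, i + p < L → T[i]? = T[i + p]? := by
    intro i hi
    have := hper'.2 i (by rw [hlenB']; exact hi)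
    rw [List.getElem?_take, List.getElem?_take] at this
    simp only [show i < L by omega, show i + p < L from hi, if_pos] at this
    exact this
  -- iterate the period
  have hperT' : ∀ r j, r * p ≤ j → j < L → T[j - r * p]? = T[j]? := by
    intro r
    induction r with
    | zero => intro j _ _; simp
    | succ r ih =>
      intro j hrp hjL
      have h1 : r * p ≤ j := by
        have : r * p ≤ (r+1) * p := Nat.mul_le_mul_right p (by omega)
        omega
      have hstep : (r+1) * p = r * p + p := by ring
      have h2 : j - (r+1) * p + p = j - r * p := by omega
      have h3 : j - (r+1)*p + p < L := by omega
      calc T[j - (r+1)*p]? = T[j - (r+1)*p + p]? := hperT _ (by omega)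
        _ = T[j - r*p]? := by rw [h2]
        _ = T[j]? := ih j h1 hjL
  -- Key: if B occurs at a, a+p, ..., a+(Δ'-1)p then T.take L occurs at a
  have keyA : ∀ a, (∀ s, s < Δ' → OccursAt B T (a + s * p)) → OccursAt (T.take L) T a := by
    intro a hocc
    have hlast := hocc (Δ' - 1) (by omega)
    have haL : a + L ≤ T.length := by
      have := hlast.1
      omega
    constructor
    · rw [hlenB']; exact haL
    · rw [hlenB']
      apply List.ext_getElem?
      intro n
      rcases lt_or_ge n L with hn | hn
      · -- both sides are indexed meaningfully
        rw [List.getElem?_take]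
        simp only [hn, if_pos]
        rw [List.getElem?_take]
        simp only [hn, if_pos]
        rw [List.getElem?_drop]
        -- choose r
        set r := min (n / p) (Δ' - 1) with hr
        have hrp : r * p ≤ n := by
          have h1 : r ≤ n / p := min_le_left _ _
          have h2 : n / p * p ≤ n := Nat.div_mul_le_self n p
          calc r * p ≤ n / p * p := Nat.mul_le_mul_right p h1
            _ ≤ n := h2
        have hk : n - r * p < B.length := by
          rcases le_or_gt (n / p) (Δ' - 1) with h | h
          · have hreq : r = n / p := min_eq_left h
            have := Nat.mod_add_div n p
            have hmod : n % p < p := Nat.mod_lt n hp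
            have : n - r * p = n % p := by
              rw [hreq]
              have := Nat.mod_add_div n p
              have h2 : n / p * p = p * (n / p) := Nat.mul_comm _ _
              omega
            omega
          · have hreq : r = Δ' - 1 := min_eq_right (by omega)
            rw [hreq]
            omega
        have hrd : r < Δ' := by
          have : r ≤ Δ' - 1 := min_le_right _ _
          omega
        have e1 : T[a + n]? = B[n - r * p]? := by
          have := hocc_elem (a + r * p) (hocc r hrd) (n - r * p) hk
          rw [show a + r * p + (n - r * p) = a + n by omega] at this
          exact this
        have e2 : T[n]? = B[n - r * p]? := by
          rw [← hperT' r n hrp hn]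
          exact hBpre _ hk
        rw [e1, e2]
      · rw [List.getElem?_take, List.getElem?_take]
        simp [Nat.not_lt.2 hn]
  -- bound on occurrences
  have hbound : ∀ s, OccursAt B T s → s ≤ T.length := fun s hs => by
    have := hs.1; omega
  -- every occurrence lies in some maximal progression
  have main : ∀ i, OccursAt B T i →
      ∃ a t r, MaxProg {s | OccursAt B T s} p a t ∧ r < t ∧ i = a + r * p := by
    intro i
    induction i using Nat.strong_induction_on with
    | _ i ih =>
    intro hi
    by_cases hprev : ∃ b, b + p = i ∧ OccursAt B T b
    · obtain ⟨b, hb, hbocc⟩ := hprev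
      obtain ⟨a, t, r, hmp, hrt, hbe⟩ := ih b (by omega) hbocc
      refine ⟨a, t, r + 1, hmp, ?_, by nlinarith [hbe, hb]⟩
      by_contra h
      have hrt1 : r + 1 = t := by omega
      apply hmp.2.2.2
      have : a + t * p = i := by
        rw [← hrt1]
        have : (r + 1) * p = r * p + p := by ring
        omega
      rw [this]; exact hi
    · push_neg at hprev
      have hnon : ∃ t, ¬ OccursAt B T (i + t * p) := by
        refine ⟨T.length + 1, fun h => ?_⟩
        have h1 := hbound _ h
        have h2 : T.length + 1 ≤ (T.length + 1) * p := Nat.le_mul_of_pos_right _ hp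
        omega
      set t := Nat.find hnon with ht
      have ht0 : 0 < t := by
        rcases Nat.eq_zero_or_pos t with h | h
        · exfalso
          have := Nat.find_spec hnon
          rw [← ht, h] at this
          simp at this
          exact this hi
        · exact h
      refine ⟨i, t, 0, ⟨ht0, ?_, ?_, Nat.find_spec hnon⟩, ht0, by simp⟩
      · intro r hr
        have := Nat.find_min hnon hr
        simpa using this
      · intro b hb hbS
        exact hprev b hb hbS
  -- the covering property
  have hcover : ∀ q, q < T.length →
      ∃ i, OccursAt (T.take L) T i ∧ i ≤ q ∧ q < i + (T.take L).length := by
    intro q hq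
    obtain ⟨i, hi, hiq, hqi⟩ := hcov.2 q hq
    obtain ⟨a, t, r, hmp, hrt, hie⟩ := main i hi
    have ht : Δ' ≤ t := hprog a t hmp
    set m := min r (t - Δ') with hm
    refine ⟨a + m * p, keyA (a + m * p) ?_, ?_, ?_⟩
    · intro s hs
      have hin : m + s < t := by
        have h1 : m ≤ t - Δ' := min_le_right _ _
        omega
      have := hmp.2.1 (m + s) hin
      have heq : a + (m + s) * p = a + m * p + s * p := by ring
      rwa [heq] at this
    · have : m * p ≤ r * p := Nat.mul_le_mul_right p (min_le_left _ _)
      omega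
    · rw [hlenB']
      have hrm : r ≤ m + (Δ' - 1) := by
        rcases le_or_gt r (t - Δ') with h | h
        · have : m = r := min_eq_left h
          omega
        · have : m = t - Δ' := min_eq_right (by omega)
          omega
      have : r * p ≤ (m + (Δ' - 1)) * p := Nat.mul_le_mul_right p hrm
      have hdist : (m + (Δ' - 1)) * p = m * p + (Δ' - 1) * p := by ring
      omega
  refine ⟨?_, hcover⟩
  obtain ⟨i, hi, -, -⟩ := hcover 0 hTpos
  exact ⟨i, hi⟩
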